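/- Let T > 0, ν > 0, L ≥ 0, C ≥ 0, and let y, g, h : [0,T] → ℝ be functions with y differentiable, y ≥ 0, g ≥ 0, h ≥ 0, and h² integrable on [0,T]. Suppose that for all t ∈ [0,T], (1/2)·y'(t) + ν·g(t)² ≤ L·√(y(t))·g(t) + C·h(t)·g(t). Then for all t ∈ [0,T], √(y(t)) ≤ exp(L²·t/(2ν))·( √(y(0)) + (C/√ν)·(∫₀ᵗ h(s)² ds)^{1/2} ). (Conclusion of Lemma 4.1 in abstract form: the a posteriori L² error bound ‖e(t)‖ ≤ exp(L_f² t/(2ν))·[ ‖e(0)‖ + (C_P/√ν)·‖R(u)‖_{L²(0,t;L²)} ].) -/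

import Mathlib

open MeasureTheory intervalIntegral

/-- Conclusion of Lemma 4.1 in abstract form: if
`(1/2)·y' + ν·g² ≤ L·√y·g + C·h·g` on `[0,T]`, then
`√(y(t)) ≤ exp(L²t/(2ν))·(√(y(0)) + (C/√ν)·(∫₀ᵗ h²)^{1/2})`. -/
theorem a_posteriori_L2_error_bound
    (T ν L C : ℝ) (hT : 0 < T) (hν : 0 < ν) (hL : 0 ≤ L) (hC : 0 ≤ C)
    (y y' g h : ℝ → ℝ)
    (hy : ∀ t ∈ Set.Icc (0 : ℝ) T, HasDerivWithinAt y (y' t) (Set.Icc (0 : ℝ) T) t)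
    (hy0 : ∀ t ∈ Set.Icc (0 : ℝ) T, 0 ≤ y t)
    (hg0 : ∀ t ∈ Set.Icc (0 : ℝ) T, 0 ≤ g t)
    (hh0 : ∀ t ∈ Set.Icc (0 : ℝ) T, 0 ≤ h t)
    (hh2 : IntervalIntegrable (fun s => h s ^ 2) volume 0 T)
    (hineq : ∀ t ∈ Set.Icc (0 : ℝ) T,
      (1 / 2) * y' t + ν * g t ^ 2 ≤ L * Real.sqrt (y t) * g t + C * h t * g t) :
    ∀ t ∈ Set.Icc (0 : ℝ) T,
      Real.sqrt (y t) ≤ Real.exp (L ^ 2 * t / (2 * ν)) *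
        (Real.sqrt (y 0) + (C / Real.sqrt ν) * Real.sqrt (∫ s in (0 : ℝ)..t, h s ^ 2)) := by
  intro t ht
  set K : ℝ := L ^ 2 / ν with hK
  have hK0 : 0 ≤ K := by positivity
  -- pointwise differential inequality after Young's inequality
  have key : ∀ s ∈ Set.Icc (0 : ℝ) T, y' s ≤ K * y s + (C ^ 2 / ν) * h s ^ 2 := by
    intro s hs
    have ha : Real.sqrt (y s) ^ 2 = y s := Real.sq_sqrt (hy0 s hs)
    have ha0 : 0 ≤ Real.sqrt (y s) := Real.sqrt_nonneg _
    have h1 := hineq s hs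
    have h2 : ν * y' s ≤ L ^ 2 * y s + C ^ 2 * h s ^ 2 := by
      nlinarith [sq_nonneg (ν * g s - L * Real.sqrt (y s)),
        sq_nonneg (ν * g s - C * h s), hν.le]
    rw [hK, div_mul_eq_mul_div, div_mul_eq_mul_div, ← add_div, le_div_iff₀ hν]
    linarith
  -- the rescaled function w
  set w : ℝ → ℝ := fun s => Real.exp (-K * s) * y s with hw
  have hyc : ContinuousOn y (Set.Icc (0 : ℝ) T) := fun x hx =>
    (hy x hx).continuousWithinAt
  have hwc : ContinuousOn w (Set.Icc (0 : ℝ) t) := by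
    apply ContinuousOn.mul
    · exact (Real.continuous_exp.comp (continuous_const.mul continuous_id)).continuousOn
    · exact hyc.mono (Set.Icc_subset_Icc le_rfl ht.2)
  have hwderiv : ∀ x ∈ Set.Ioo (0 : ℝ) t,
      HasDerivWithinAt w (Real.exp (-K * x) * (-K) * y x + Real.exp (-K * x) * y' x)
        (Set.Ioi x) x := by
    intro x hx
    have hxT : x ∈ Set.Icc (0 : ℝ) T := ⟨hx.1.le, hx.2.le.trans ht.2⟩
    have hyd : HasDerivWithinAt y (y' x) (Set.Ioi x) x :=
      (hy x hxT).mono_of_mem_nhdsWithin (Icc_mem_nhdsGT_of_mem ⟨hx.1.le, lt_of_lt_of_le hx.2 ht.2⟩)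
    have hed : HasDerivAt (fun s => Real.exp (-K * s)) (Real.exp (-K * x) * (-K)) x := by
      have := ((hasDerivAt_id x).const_mul (-K)).exp
      simpa using this
    have := hed.hasDerivWithinAt.mul hyd
    exact this
  -- integrability of the forcing term on [0, t]
  have hint : IntegrableOn (fun s => (C ^ 2 / ν) * h s ^ 2) (Set.Icc (0 : ℝ) t) := by
    have h1 : IntegrableOn (fun s => h s ^ 2) (Set.Icc (0 : ℝ) T) :=
      (intervalIntegrable_iff_integrableOn_Icc_of_le hT.le).mp hh2
    exact (h1.mono_set (Set.Icc_subset_Icc le_rfl ht.2)).const_mul _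
  -- derivative bound
  have hbound : ∀ x ∈ Set.Ioo (0 : ℝ) t,
      Real.exp (-K * x) * (-K) * y x + Real.exp (-K * x) * y' x ≤ (C ^ 2 / ν) * h x ^ 2 := by
    intro x hx
    have hxT : x ∈ Set.Icc (0 : ℝ) T := ⟨hx.1.le, hx.2.le.trans ht.2⟩
    have h1 := key x hxT
    have he1 : Real.exp (-K * x) ≤ 1 := by
      apply Real.exp_le_one_iff.mpr
      nlinarith [hx.1]
    have he0 : (0 : ℝ) < Real.exp (-K * x) := Real.exp_pos _
    have hh2x : 0 ≤ (C ^ 2 / ν) * h x ^ 2 := by positivity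
    calc Real.exp (-K * x) * (-K) * y x + Real.exp (-K * x) * y' x
        = Real.exp (-K * x) * (y' x - K * y x) := by ring
      _ ≤ Real.exp (-K * x) * ((C ^ 2 / ν) * h x ^ 2) := by
          apply mul_le_mul_of_nonneg_left _ he0.le
          linarith
      _ ≤ 1 * ((C ^ 2 / ν) * h x ^ 2) := mul_le_mul_of_nonneg_right he1 hh2x
      _ = (C ^ 2 / ν) * h x ^ 2 := by ring
  have hsub : w t - w 0 ≤ ∫ s in (0 : ℝ)..t, (C ^ 2 / ν) * h s ^ 2 :=
    sub_le_integral_of_hasDeriv_right_of_le ht.1 hwc hwderiv hint hbound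
  -- rewrite the integral
  set I : ℝ := ∫ s in (0 : ℝ)..t, h s ^ 2 with hI
  have hI0 : 0 ≤ I := by
    apply intervalIntegral.integral_nonneg ht.1
    intro u hu
    positivity
  have hintI : (∫ s in (0 : ℝ)..t, (C ^ 2 / ν) * h s ^ 2) = (C ^ 2 / ν) * I := by
    rw [hI, ← intervalIntegral.integral_const_mul]
  have hw0 : w 0 = y 0 := by simp [hw]
  have hyt : y t ≤ Real.exp (K * t) * (y 0 + (C ^ 2 / ν) * I) := by
    have h1 : Real.exp (-K * t) * y t ≤ y 0 + (C ^ 2 / ν) * I := by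
      have h2 := hsub
      rw [hintI, hw0] at h2
      simp only [hw] at h2
      linarith
    have h2 : (0 : ℝ) < Real.exp (K * t) := Real.exp_pos _
    have := mul_le_mul_of_nonneg_left h1 h2.le
    calc y t = Real.exp (K * t) * (Real.exp (-K * t) * y t) := by
          rw [← mul_assoc, ← Real.exp_add, show K * t + -K * t = 0 by ring,
            Real.exp_zero, one_mul]
      _ ≤ Real.exp (K * t) * (y 0 + (C ^ 2 / ν) * I) := this
  -- take square roots
  have hy00 : 0 ≤ y 0 := hy0 0 ⟨le_rfl, hT.le⟩
  have hsum0 : 0 ≤ y 0 + (C ^ 2 / ν) * I := by positivity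
  have hsq1 : Real.sqrt (y t) ≤ Real.sqrt (Real.exp (K * t) * (y 0 + (C ^ 2 / ν) * I)) :=
    Real.sqrt_le_sqrt hyt
  have hexp : Real.sqrt (Real.exp (K * t)) = Real.exp (K * t / 2) := by
    rw [show Real.exp (K * t) = Real.exp (K * t / 2) * Real.exp (K * t / 2) by
      rw [← Real.exp_add]; ring_nf, Real.sqrt_mul_self (Real.exp_pos _).le]
  have hsq2 : Real.sqrt (Real.exp (K * t) * (y 0 + (C ^ 2 / ν) * I))
      = Real.exp (K * t / 2) * Real.sqrt (y 0 + (C ^ 2 / ν) * I) := by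
    rw [Real.sqrt_mul (Real.exp_pos _).le, hexp]
  have hsq3 : Real.sqrt (y 0 + (C ^ 2 / ν) * I)
      ≤ Real.sqrt (y 0) + Real.sqrt ((C ^ 2 / ν) * I) := by
    have hb0 : 0 ≤ (C ^ 2 / ν) * I := by positivity
    have h1 : y 0 + (C ^ 2 / ν) * I
        ≤ (Real.sqrt (y 0) + Real.sqrt ((C ^ 2 / ν) * I)) ^ 2 := by
      have := Real.sq_sqrt hy00
      have := Real.sq_sqrt hb0
      nlinarith [mul_nonneg (Real.sqrt_nonneg (y 0)) (Real.sqrt_nonneg ((C ^ 2 / ν) * I))]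
    calc Real.sqrt (y 0 + (C ^ 2 / ν) * I)
        ≤ Real.sqrt ((Real.sqrt (y 0) + Real.sqrt ((C ^ 2 / ν) * I)) ^ 2) :=
          Real.sqrt_le_sqrt h1
      _ = Real.sqrt (y 0) + Real.sqrt ((C ^ 2 / ν) * I) :=
          Real.sqrt_sq (by positivity)
  have hsq4 : Real.sqrt ((C ^ 2 / ν) * I) = (C / Real.sqrt ν) * Real.sqrt I := by
    rw [show (C ^ 2 / ν) * I = ((C / Real.sqrt ν) * Real.sqrt I) ^ 2 by
      rw [mul_pow, div_pow, Real.sq_sqrt hν.le, Real.sq_sqrt hI0]]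
    exact Real.sqrt_sq (by positivity)
  have hKt : K * t / 2 = L ^ 2 * t / (2 * ν) := by
    rw [hK, div_mul_eq_mul_div, div_div, mul_comm ν 2]
  calc Real.sqrt (y t)
      ≤ Real.exp (K * t / 2) * Real.sqrt (y 0 + (C ^ 2 / ν) * I) := by
        rw [← hsq2]; exact hsq1
    _ ≤ Real.exp (K * t / 2) * (Real.sqrt (y 0) + (C / Real.sqrt ν) * Real.sqrt I) := by
        apply mul_le_mul_of_nonneg_left _ (Real.exp_pos _).le
        rw [← hsq4]; exact hsq3
    _ = Real.exp (L ^ 2 * t / (2 * ν)) *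
        (Real.sqrt (y 0) + (C / Real.sqrt ν) * Real.sqrt I) := by rw [hKt]
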